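/- Let d be a real number with d > 1 and let a₁, a₂ ∈ ℝ satisfy a₁² + a₂² = 1. Define the fidelities of a 1 → 2 universal cloner in the irreducible representation α by F₁₂ = (1/d)·(aᵀ·A·a) and F₁₃ = (1/d)·(aᵀ·B·a), where a = (a₁, a₂). Then the point (F₁₂, F₁₃) lies on the ellipse d²·(F₁₂ + F₁₃ − 1)² + (d²/(d²−1))·(F₁₃ − F₁₂)² = 1; in particular, (d−1)/d ≤ F₁₂ + F₁₃ ≤ (d+1)/d, so as d → ∞ the ellipse is squeezed to the line F₁₃ = −F₁₂ + 1. -/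

import Mathlib

open Matrix

/-- The matrix `𝕍′_α(13)` of the irrep of the algebra of partially transposed permutation
operators for `n = 3`. -/
noncomputable def V13 (d : ℝ) : Matrix (Fin 2) (Fin 2) ℝ :=
  (1 / 2 : ℝ) • !![d + 1, -Real.sqrt (d ^ 2 - 1); -Real.sqrt (d ^ 2 - 1), d - 1]

/-- The matrix `𝕍′_α(23)` of the irrep of the algebra of partially transposed permutation
operators for `n = 3`. -/
noncomputable def V23 (d : ℝ) : Matrix (Fin 2) (Fin 2) ℝ :=
  (1 / 2 : ℝ) • !![d + 1, Real.sqrt (d ^ 2 - 1); Real.sqrt (d ^ 2 - 1), d - 1]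

/-- The fidelities of a `1 → 2` universal cloner produced by a real pure state
`a = (a₁, a₂)` in the irrep `α` lie on the ellipse
`d²(F₁₂+F₁₃−1)² + (d²/(d²−1))(F₁₃−F₁₂)² = 1`; in particular
`(d−1)/d ≤ F₁₂+F₁₃ ≤ (d+1)/d`. -/
theorem stmt11 (d : ℝ) (hd : 1 < d) (a₁ a₂ : ℝ) (ha : a₁ ^ 2 + a₂ ^ 2 = 1)
    (F₁₂ F₁₃ : ℝ)
    (hF₁₂ : F₁₂ = (1 / d) * (![a₁, a₂] ⬝ᵥ (V13 d *ᵥ ![a₁, a₂])))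
    (hF₁₃ : F₁₃ = (1 / d) * (![a₁, a₂] ⬝ᵥ (V23 d *ᵥ ![a₁, a₂]))) :
    d ^ 2 * (F₁₂ + F₁₃ - 1) ^ 2 + (d ^ 2 / (d ^ 2 - 1)) * (F₁₃ - F₁₂) ^ 2 = 1 ∧
      (d - 1) / d ≤ F₁₂ + F₁₃ ∧ F₁₂ + F₁₃ ≤ (d + 1) / d := by

  have hd0 : d ≠ 0 := by positivity
  have hd2 : (0:ℝ) < d ^ 2 - 1 := by nlinarith
  set s := Real.sqrt (d ^ 2 - 1) with hs
  have hs2 : s ^ 2 = d ^ 2 - 1 := Real.sq_sqrt hd2.le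
  have h12 : F₁₂ = (1 / (2*d)) * ((d+1)*a₁^2 + (d-1)*a₂^2 - 2*s*a₁*a₂) := by
    rw [hF₁₂]; simp [V13, mulVec, dotProduct, Fin.sum_univ_succ]; ring
  have h13 : F₁₃ = (1 / (2*d)) * ((d+1)*a₁^2 + (d-1)*a₂^2 + 2*s*a₁*a₂) := by
    rw [hF₁₃]; simp [V23, mulVec, dotProduct, Fin.sum_univ_succ]; ring
  have hsum : F₁₂ + F₁₃ = (d + a₁^2 - a₂^2) / d := by
    rw [h12, h13]; field_simp; nlinarith []
  have hdiff : F₁₃ - F₁₂ = 2 * s * a₁ * a₂ / d := by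
    rw [h12, h13]; field_simp; ring
  refine ⟨?_, ?_, ?_⟩
  · rw [hsum, hdiff]; field_simp
    linear_combination (4*a₁^2*a₂^2) * hs2 + ((d^2-1)*(a₁^2+a₂^2+1)) * ha
  · rw [hsum]; gcongr <;> nlinarith [sq_nonneg a₁, sq_nonneg a₂]
  · rw [hsum]; gcongr (?_)/d <;> nlinarith [sq_nonneg a₁, sq_nonneg a₂]
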